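/- arXiv:2412.02007 — 2 statements merged into one kernel-verified Lean document; each statement's English description precedes it below -/
import Mathlib

section
/- Let c ≥ 0 be a real number and let f be a holomorphic function on a neighborhood of 0 in ℂ, not identically zero. Then the integral ∫_{|z|<r} |f(z)|² |z|^{-2c} dλ(z) (with respect to Lebesgue measure λ) is finite for some r > 0 if and only if f vanishes at 0 to order at least ⌊c⌋. -/
open MeasureTheory Set Real Filter

lemma aux_key {t r : ℝ} (hr : 0 < r) :
    IntegrableOn (fun z : ℂ => ‖z‖ ^ t) (Metric.ball (0:ℂ) r) volume ↔ -2 < t := by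
  set e := Complex.measurableEquivRealProd with he
  have e_pres : MeasurePreserving (⇑e.symm) volume volume :=
    Complex.volume_preserving_equiv_real_prod.symm e
  set T : Set (ℝ × ℝ) := ⇑e.symm ⁻¹' (Metric.ball (0:ℂ) r) with hT
  set s : Set (ℝ × ℝ) := Ioo (0:ℝ) r ×ˢ Ioo (-π) π with hs_def
  have hs : MeasurableSet s := measurableSet_Ioo.prod measurableSet_Ioo
  have hsub : s ⊆ polarCoord.target := by
    rw [polarCoord_target]
    exact prod_mono Ioo_subset_Ioi_self subset_rfl
  have step1 : IntegrableOn (fun z : ℂ => ‖z‖ ^ t) (Metric.ball (0:ℂ) r) volume ↔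
      IntegrableOn (fun p : ℝ × ℝ => ‖e.symm p‖ ^ t) T volume :=
    ((e_pres.restrict_preimage measurableSet_ball).integrable_comp_emb
      (MeasurableEquiv.measurableEmbedding _)).symm
  have himg : ⇑polarCoord.symm '' s = polarCoord.source ∩ ⇑polarCoord ⁻¹' s :=
    polarCoord.symm_image_eq_source_inter_preimage hsub
  have hmem : polarCoord.source ∩ ⇑polarCoord ⁻¹' s = polarCoord.source ∩ T := by
    ext p
    simp only [mem_inter_iff, and_congr_right_iff]
    intro hp
    have htar := polarCoord.map_source hp
    have hpq : polarCoord.symm (polarCoord p) = p := polarCoord.left_inv hp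
    rw [polarCoord_target] at htar
    rw [mem_prod, mem_Ioi, mem_Ioo] at htar
    obtain ⟨h1, h2⟩ := htar
    have habs : ‖e.symm p‖ = (polarCoord p).1 := by
      conv_lhs => rw [← hpq]
      have h3 : (e.symm (polarCoord.symm (polarCoord p)) : ℂ)
          = Complex.polarCoord.symm (polarCoord p) := rfl
      rw [h3, Complex.norm_polarCoord_symm, abs_of_pos h1]
    constructor
    · rintro ⟨ha, _⟩
      simp only [hT, mem_preimage, Metric.mem_ball, dist_zero_right]
      rw [habs]
      exact ha.2
    · intro hTp
      simp only [hT, mem_preimage, Metric.mem_ball, dist_zero_right] at hTp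
      rw [habs] at hTp
      refine ⟨⟨h1, hTp⟩, h2⟩
  have haeq : T =ᵐ[volume] ⇑polarCoord.symm '' s := by
    rw [himg, hmem]
    have h1 : ((polarCoord.source ∩ T : Set (ℝ × ℝ)) : Set (ℝ × ℝ)) =ᵐ[volume]
        ((univ ∩ T : Set (ℝ × ℝ)) : Set (ℝ × ℝ)) :=
      MeasureTheory.ae_eq_set_inter polarCoord_source_ae_eq_univ (MeasureTheory.ae_eq_refl T)
    rw [univ_inter] at h1
    exact h1.symm
  have step2 : IntegrableOn (fun p : ℝ × ℝ => ‖e.symm p‖ ^ t) T volume ↔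
      IntegrableOn (fun p : ℝ × ℝ => ‖e.symm p‖ ^ t) (⇑polarCoord.symm '' s) volume :=
    ⟨fun h => h.congr_set_ae haeq.symm, fun h => h.congr_set_ae haeq⟩
  set B : ℝ × ℝ → ℝ × ℝ →L[ℝ] ℝ × ℝ := fun p =>
    LinearMap.toContinuousLinearMap (Matrix.toLin (Module.Basis.finTwoProd ℝ) (Module.Basis.finTwoProd ℝ)
      !![cos p.2, -p.1 * sin p.2; sin p.2, p.1 * cos p.2]) with hB
  have B_det : ∀ p, (B p).det = p.1 := by
    intro p
    conv_rhs => rw [← one_mul p.1, ← cos_sq_add_sin_sq p.2]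
    simp only [hB, neg_mul, LinearMap.det_toContinuousLinearMap, LinearMap.det_toLin,
      Matrix.det_fin_two_of, sub_neg_eq_add]
    ring
  have hinj : InjOn (⇑polarCoord.symm) s := polarCoord.symm.injOn.mono hsub
  have hder : ∀ p ∈ s, HasFDerivWithinAt (⇑polarCoord.symm) (B p) s p := fun p _ =>
    (hasFDerivAt_polarCoord_symm p).hasFDerivWithinAt
  have step3 := integrableOn_image_iff_integrableOn_abs_det_fderiv_smul volume hs hder hinj
      (fun p : ℝ × ℝ => ‖e.symm p‖ ^ t)
  have step4 : IntegrableOn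
      (fun p : ℝ × ℝ => |(B p).det| • ‖e.symm (polarCoord.symm p)‖ ^ t) s volume ↔
      IntegrableOn (fun p : ℝ × ℝ => p.1 ^ (t + 1)) s volume := by
    apply integrableOn_congr_fun _ hs
    intro p hp
    rw [hs_def, mem_prod, mem_Ioo] at hp
    have hp1 : 0 < p.1 := hp.1.1
    have h3 : (e.symm (polarCoord.symm p) : ℂ) = Complex.polarCoord.symm p := rfl
    dsimp only
    rw [B_det p, h3, Complex.norm_polarCoord_symm, abs_of_pos hp1, smul_eq_mul,
      Real.rpow_add hp1, Real.rpow_one]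
    ring
  have step5 : IntegrableOn (fun p : ℝ × ℝ => p.1 ^ (t + 1)) s volume ↔
      IntegrableOn (fun x : ℝ => x ^ (t + 1)) (Ioo (0:ℝ) r) volume := by
    rw [hs_def, IntegrableOn, IntegrableOn, Measure.volume_eq_prod, ← Measure.prod_restrict]
    have hmeas : AEStronglyMeasurable (fun p : ℝ × ℝ => p.1 ^ (t + 1))
        ((volume.restrict (Ioo (0:ℝ) r)).prod (volume.restrict (Ioo (-π) π))) := by
      have : Measurable (fun p : ℝ × ℝ => p.1 ^ (t + 1)) := by fun_prop
      exact this.aestronglyMeasurable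
    constructor
    · intro h
      obtain ⟨-, h2⟩ := (integrable_prod_iff hmeas).mp h
      simp only [integral_const, Measure.restrict_apply_univ, Real.volume_Ioo, smul_eq_mul] at h2
      have h2π : (0:ℝ) < π - -π := by linarith [pi_pos]
      rw [measureReal_def, Measure.restrict_apply_univ, Real.volume_Ioo, ENNReal.toReal_ofReal h2π.le] at h2
      have h3 : Integrable (fun x : ℝ => ‖x ^ (t + 1)‖) (volume.restrict (Ioo (0:ℝ) r)) := by
        have h4 := h2.const_mul (π - -π)⁻¹
        simpa only [← mul_assoc, inv_mul_cancel₀ h2π.ne', one_mul] using h4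
      refine (integrable_norm_iff ?_).mp h3
      exact (by fun_prop : Measurable fun x : ℝ => x ^ (t+1)).aestronglyMeasurable
    · intro h
      have hfin : IsFiniteMeasure (volume.restrict (Ioo (-π) π)) := by
        constructor
        rw [Measure.restrict_apply_univ, Real.volume_Ioo]
        exact ENNReal.ofReal_lt_top
      have h1 : Integrable (fun _ : ℝ => (1:ℝ)) (volume.restrict (Ioo (-π) π)) :=
        integrable_const 1
      simpa using h.mul_prod h1
  rw [step1, step2, step3, step4, step5, intervalIntegral.integrableOn_Ioo_rpow_iff hr]
  constructor <;> intro h <;> linarith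


/-- One-variable multiplier ideal computation: for `c ≥ 0` and `f` holomorphic
near `0 ∈ ℂ` and not identically zero, `∫_{|z|<r} |f|² |z|^(-2c) dλ < ∞` for some
`r > 0` iff `f` vanishes at `0` to order at least `⌊c⌋`. -/
theorem stmt_0 (c : ℝ) (hc : 0 ≤ c) (f : ℂ → ℂ) (U : Set ℂ)
    (hU : IsOpen U) (h0 : (0 : ℂ) ∈ U) (hf : AnalyticOnNhd ℂ f U)
    (hne : ∃ᶠ z in nhds (0 : ℂ), f z ≠ 0) :
    (∃ r > (0 : ℝ), IntegrableOn
        (fun z : ℂ => ‖f z‖ ^ 2 * ‖z‖ ^ (-(2 * c)))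
        (Metric.ball (0 : ℂ) r) volume) ↔
    ∃ g : ℂ → ℂ, AnalyticAt ℂ g 0 ∧ ∀ᶠ z in nhds (0 : ℂ), f z = z ^ (⌊c⌋₊) * g z := by
  have hfa : AnalyticAt ℂ f 0 := hf 0 h0
  have hord : analyticOrderAt f 0 ≠ ⊤ := by
    intro h
    rw [analyticOrderAt_eq_top] at h
    exact ((hne.and_eventually h).exists).elim fun z hz => hz.1 hz.2
  set n : ℕ := (analyticOrderAt f 0).toNat with hn_def
  have hn : analyticOrderAt f 0 = n := (ENat.coe_toNat hord).symm
  obtain ⟨g0, hg0a, hg00, hfeq0⟩ := (hfa.analyticOrderAt_eq_natCast (n := n)).mp hn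
  have hfeq : ∀ᶠ z in nhds (0:ℂ), f z = z ^ n * g0 z := by
    filter_upwards [hfeq0] with z hz
    simpa [smul_eq_mul] using hz
  set m : ℕ := ⌊c⌋₊ with hm_def
  have hRHS : (∃ g : ℂ → ℂ, AnalyticAt ℂ g 0 ∧ ∀ᶠ z in nhds (0:ℂ), f z = z ^ m * g z) ↔
      m ≤ n := by
    constructor
    · rintro ⟨g, hga, hfg⟩
      have hgord : analyticOrderAt g 0 ≠ ⊤ := by
        intro htop
        rw [analyticOrderAt_eq_top] at htop
        have hev : ∀ᶠ z in nhds (0:ℂ), f z = 0 := by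
          filter_upwards [hfg, htop] with z h1 h2
          rw [h1, h2, mul_zero]
        exact ((hne.and_eventually hev).exists).elim fun z hz => hz.1 hz.2
      set k : ℕ := (analyticOrderAt g 0).toNat with hk_def
      have hk : analyticOrderAt g 0 = k := (ENat.coe_toNat hgord).symm
      obtain ⟨h, hha, hh0, hgeq⟩ := (hga.analyticOrderAt_eq_natCast (n := k)).mp hk
      have hnk : analyticOrderAt f 0 = ((m + k : ℕ) : ℕ∞) := by
        rw [hfa.analyticOrderAt_eq_natCast]
        refine ⟨h, hha, hh0, ?_⟩
        filter_upwards [hfg, hgeq] with z h1 h2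
        rw [h1, h2]
        simp only [sub_zero, smul_eq_mul]
        ring
      rw [hn] at hnk
      have : n = m + k := by exact_mod_cast hnk
      omega
    · intro hmn
      refine ⟨fun z => z ^ (n - m) * g0 z, (analyticAt_id.pow _).mul hg0a, ?_⟩
      filter_upwards [hfeq] with z hz
      rw [hz, ← mul_assoc, ← pow_add, Nat.add_sub_cancel' hmn]
  rw [hRHS]
  set ε : ℝ := ‖g0 0‖ / 2 with hε_def
  set M : ℝ := ‖g0 0‖ + 1 with hM_def
  have habs0 : 0 < ‖g0 0‖ := norm_pos_iff.mpr hg00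
  have hε : 0 < ε := by rw [hε_def]; positivity
  have hM : 0 < M := by rw [hM_def]; positivity
  have hev2 : ∀ᶠ z in nhds (0:ℂ), ‖g0 z‖ ∈ Ioo ε M := by
    have hcont : ContinuousAt (fun z => ‖g0 z‖) 0 :=
      continuous_norm.continuousAt.comp hg0a.continuousAt
    apply hcont.eventually_mem
    apply Ioo_mem_nhds
    · rw [hε_def]; linarith
    · rw [hM_def]; linarith
  have hevU : ∀ᶠ z in nhds (0:ℂ), z ∈ U := hU.eventually_mem h0
  obtain ⟨δ, hδ, hball⟩ := Metric.eventually_nhds_iff.mp ((hfeq.and hev2).and hevU)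
  set t : ℝ := 2 * n - 2 * c with ht_def
  have hcomp : ∀ z : ℂ, z ≠ 0 → dist z 0 < δ →
      ‖f z‖ ^ 2 * ‖z‖ ^ (-(2*c)) =
        ‖g0 z‖ ^ 2 * ‖z‖ ^ t := by
    intro z hz0 hzδ
    obtain ⟨⟨h1, _⟩, _⟩ := hball hzδ
    have ha : 0 < ‖z‖ := norm_pos_iff.mpr hz0
    rw [h1, norm_mul, norm_pow]
    have hzt : ‖z‖ ^ t = (‖z‖ ^ n) ^ 2 * ‖z‖ ^ (-(2*c)) := by
      have e1 : t = ((n * 2 : ℕ) : ℝ) + (-(2*c)) := by rw [ht_def]; push_cast; ring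
      rw [e1, Real.rpow_add ha, Real.rpow_natCast, pow_mul]
    rw [hzt]
    ring
  constructor
  · rintro ⟨r₀, hr₀, hint⟩
    set r₁ := min r₀ δ with hr₁def
    have hr₁ : 0 < r₁ := lt_min hr₀ hδ
    have hint₁ : IntegrableOn
        (fun z : ℂ => ‖f z‖ ^ 2 * ‖z‖ ^ (-(2 * c)))
        (Metric.ball (0:ℂ) r₁) volume :=
      hint.mono_set (Metric.ball_subset_ball (min_le_left _ _))
    have h0ae : ∀ᵐ z ∂(volume.restrict (Metric.ball (0:ℂ) r₁)), z ≠ 0 := by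
      refine ae_iff.mpr ?_
      simp only [not_not]
      have hsub0 : {z : ℂ | z = 0} ⊆ {(0:ℂ)} := by intro z hz; simpa using hz
      exact measure_mono_null hsub0 (measure_singleton 0)
    have hmeas : AEStronglyMeasurable (fun z : ℂ => ε ^ 2 * ‖z‖ ^ t)
        (volume.restrict (Metric.ball (0:ℂ) r₁)) := by
      apply Measurable.aestronglyMeasurable
      have h1 : Measurable fun x : ℝ => ε ^ 2 * x ^ t := by fun_prop
      exact h1.comp continuous_norm.measurable
    have hle : ∀ᵐ z ∂(volume.restrict (Metric.ball (0:ℂ) r₁)),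
        ‖ε ^ 2 * ‖z‖ ^ t‖ ≤
          ‖f z‖ ^ 2 * ‖z‖ ^ (-(2 * c)) := by
      filter_upwards [h0ae, ae_restrict_mem measurableSet_ball] with z hz0 hzb
      have hzδ : dist z 0 < δ := lt_of_lt_of_le (Metric.mem_ball.mp hzb) (min_le_right _ _)
      have hx : (0:ℝ) ≤ ‖z‖ ^ t := Real.rpow_nonneg (norm_nonneg z) t
      rw [hcomp z hz0 hzδ, Real.norm_eq_abs,
        abs_of_nonneg (mul_nonneg (by positivity) hx)]
      have hε2 : ε ^ 2 ≤ ‖g0 z‖ ^ 2 := by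
        obtain ⟨⟨_, hIoo⟩, _⟩ := hball hzδ
        exact pow_le_pow_left₀ hε.le hIoo.1.le 2
      exact mul_le_mul_of_nonneg_right hε2 hx
    have hint2 : Integrable (fun z : ℂ => ε ^ 2 * ‖z‖ ^ t)
        (volume.restrict (Metric.ball (0:ℂ) r₁)) := Integrable.mono' hint₁ hmeas hle
    have hint3 : IntegrableOn (fun z : ℂ => ‖z‖ ^ t)
        (Metric.ball (0:ℂ) r₁) volume := by
      have h4 := hint2.const_mul ((ε ^ 2)⁻¹)
      simpa only [IntegrableOn, ← mul_assoc, inv_mul_cancel₀ (by positivity : (ε:ℝ)^2 ≠ 0), one_mul] using h4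
    have hlt : -2 < t := (aux_key hr₁).mp hint3
    have hcn : m < n + 1 := by
      apply (Nat.floor_lt hc).mpr
      rw [ht_def] at hlt
      push_cast
      linarith
    omega
  · intro hmn
    refine ⟨δ, hδ, ?_⟩
    have hlt : -2 < t := by
      have h1 : c < m + 1 := Nat.lt_floor_add_one c
      have h2 : (m:ℝ) ≤ n := by exact_mod_cast hmn
      rw [ht_def]; linarith
    have hIt := (aux_key hδ).mpr hlt
    have hballU : Metric.ball (0:ℂ) δ ⊆ U := fun z hz => (hball (Metric.mem_ball.mp hz)).2
    have hfc : ContinuousOn f (Metric.ball (0:ℂ) δ) := (hf.continuousOn).mono hballU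
    have h0ae : ∀ᵐ z ∂(volume.restrict (Metric.ball (0:ℂ) δ)), z ≠ 0 := by
      refine ae_iff.mpr ?_
      simp only [not_not]
      have hsub0 : {z : ℂ | z = 0} ⊆ {(0:ℂ)} := by intro z hz; simpa using hz
      exact measure_mono_null hsub0 (measure_singleton 0)
    have hmeas : AEStronglyMeasurable
        (fun z : ℂ => ‖f z‖ ^ 2 * ‖z‖ ^ (-(2 * c)))
        (volume.restrict (Metric.ball (0:ℂ) δ)) := by
      apply AEStronglyMeasurable.mul
      · exact ((continuous_norm.comp_continuousOn hfc).pow 2).aestronglyMeasurable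
          measurableSet_ball
      · apply Measurable.aestronglyMeasurable
        have h1 : Measurable fun x : ℝ => x ^ (-(2 * c)) := by fun_prop
        exact h1.comp continuous_norm.measurable
    have hle : ∀ᵐ z ∂(volume.restrict (Metric.ball (0:ℂ) δ)),
        ‖‖f z‖ ^ 2 * ‖z‖ ^ (-(2 * c))‖ ≤
          M ^ 2 * ‖z‖ ^ t := by
      filter_upwards [h0ae, ae_restrict_mem measurableSet_ball] with z hz0 hzb
      have hzδ : dist z 0 < δ := Metric.mem_ball.mp hzb
      have hx : (0:ℝ) ≤ ‖z‖ ^ t := Real.rpow_nonneg (norm_nonneg z) t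
      have hnn : (0:ℝ) ≤ ‖f z‖ ^ 2 * ‖z‖ ^ (-(2 * c)) :=
        mul_nonneg (pow_nonneg (norm_nonneg _) 2)
          (Real.rpow_nonneg (norm_nonneg z) _)
      rw [Real.norm_eq_abs, abs_of_nonneg hnn, hcomp z hz0 hzδ]
      obtain ⟨⟨_, hIoo⟩, _⟩ := hball hzδ
      have hM2 : ‖g0 z‖ ^ 2 ≤ M ^ 2 :=
        pow_le_pow_left₀ (norm_nonneg _) hIoo.2.le 2
      exact mul_le_mul_of_nonneg_right hM2 hx
    exact Integrable.mono' (hIt.const_mul (M ^ 2)) hmeas hle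
end

section
/- Let U ⊆ ℂ be a nonempty connected open set and let f, g be holomorphic functions on U, neither identically zero. Suppose that for every z ∈ U the vanishing orders agree: ord_z f = ord_z g. Then there exists a holomorphic function h on U with h(z) ≠ 0 for all z ∈ U such that f = h·g on U. -/
open Topology Filter


/-- Two holomorphic functions on a connected open set `U ⊆ ℂ`, neither
identically zero, with the same vanishing order at every point, differ by a
nowhere-vanishing holomorphic factor. -/
theorem stmt_15 (U : Set ℂ) (hU : IsOpen U) (hconn : IsConnected U)
    (f g : ℂ → ℂ) (hf : AnalyticOnNhd ℂ f U) (hg : AnalyticOnNhd ℂ g U)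
    (hf0 : ∃ z ∈ U, f z ≠ 0) (hg0 : ∃ z ∈ U, g z ≠ 0)
    (hord : ∀ z (hz : z ∈ U), analyticOrderAt f z = analyticOrderAt g z) :
    ∃ h : ℂ → ℂ, AnalyticOnNhd ℂ h U ∧ (∀ z ∈ U, h z ≠ 0) ∧
      ∀ z ∈ U, f z = h z * g z := by
  classical
  set h : ℂ → ℂ := fun z => limUnder (𝓝[≠] z) (fun w => f w / g w) with hh
  -- value of h at points where g does not vanish
  have hval : ∀ w ∈ U, g w ≠ 0 → h w = f w / g w := by
    intro w hw hgw
    exact Filter.Tendsto.limUnder_eq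
      ((((hf w hw).continuousAt.div (hg w hw).continuousAt hgw).tendsto).mono_left
        nhdsWithin_le_nhds)
  -- the order of f is finite at every point of U
  have hfin : ∀ z₀ (hz₀ : z₀ ∈ U), analyticOrderAt f z₀ ≠ ⊤ := by
    intro z₀ hz₀ htop
    rw [analyticOrderAt_eq_top] at htop
    obtain ⟨w, hwU, hw⟩ := hf0
    exact hw (hf.eqOn_zero_of_preconnected_of_frequently_eq_zero hconn.isPreconnected hz₀
      ((htop.filter_mono nhdsWithin_le_nhds).frequently) hwU)
  -- key local statement
  have key : ∀ z₀ ∈ U, ∃ F : ℂ → ℂ, AnalyticAt ℂ F z₀ ∧ F z₀ ≠ 0 ∧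
      h =ᶠ[nhds z₀] F ∧ f z₀ = F z₀ * g z₀ := by
    intro z₀ hz₀
    set n : ℕ := (analyticOrderAt f z₀).toNat with hn
    have hfo : analyticOrderAt f z₀ = (n : ℕ∞) := (ENat.coe_toNat (hfin z₀ hz₀)).symm
    have hgo : analyticOrderAt g z₀ = (n : ℕ∞) := (hord z₀ hz₀) ▸ hfo
    obtain ⟨F, hF, hF0, ef⟩ := ((hf z₀ hz₀).analyticOrderAt_eq_natCast (n := n)).mp hfo
    obtain ⟨G, hG, hG0, eg⟩ := ((hg z₀ hz₀).analyticOrderAt_eq_natCast (n := n)).mp hgo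
    simp only [smul_eq_mul] at ef eg
    have eG : ∀ᶠ w in nhds z₀, G w ≠ 0 := hG.continuousAt.eventually_ne hG0
    have eU : ∀ᶠ w in nhds z₀, w ∈ U := hU.mem_nhds hz₀
    -- f / g is eventually equal to F / G on the punctured neighborhood
    have epunct : (fun w => f w / g w) =ᶠ[𝓝[≠] z₀] fun w => F w / G w := by
      filter_upwards [ef.filter_mono nhdsWithin_le_nhds, eg.filter_mono nhdsWithin_le_nhds,
        self_mem_nhdsWithin] with w h1 h2 h3
      have hw0 : (w - z₀) ^ n ≠ 0 := pow_ne_zero _ (sub_ne_zero.mpr h3)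
      rw [h1, h2, mul_div_mul_left _ _ hw0]
    -- hence h z₀ = F z₀ / G z₀
    have hz : h z₀ = F z₀ / G z₀ := by
      refine Filter.Tendsto.limUnder_eq ?_
      refine Filter.Tendsto.congr' epunct.symm ?_
      exact ((hF.continuousAt.div hG.continuousAt hG0).tendsto).mono_left nhdsWithin_le_nhds
    refine ⟨fun w => F w / G w, hF.div hG hG0, div_ne_zero hF0 hG0, ?_, ?_⟩
    · filter_upwards [ef, eg, eG, eU] with w h1 h2 h3 h4
      rcases eq_or_ne w z₀ with rfl | hwz
      · exact hz
      · have hw0 : (w - z₀) ^ n ≠ 0 := pow_ne_zero _ (sub_ne_zero.mpr hwz)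
        have hgw : g w ≠ 0 := by rw [h2]; exact mul_ne_zero hw0 h3
        rw [hval w h4 hgw, h1, h2, mul_div_mul_left _ _ hw0]
    · have h1 := ef.self_of_nhds
      have h2 := eg.self_of_nhds
      rw [h1, h2]
      field_simp
  refine ⟨h, ?_, ?_, ?_⟩
  · intro z hz
    obtain ⟨F, hF, _, heq, _⟩ := key z hz
    exact hF.congr heq.symm
  · intro z hz
    obtain ⟨F, _, hF0, heq, _⟩ := key z hz
    rw [heq.self_of_nhds]; exact hF0
  · intro z hz
    obtain ⟨F, _, _, heq, hfg⟩ := key z hz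
    rw [heq.self_of_nhds]; exact hfg
end
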